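/- In the setting of the conformal-measure construction, suppose ℒ is a positive operator on bounded functions with ℒ(1_{U_R})(y) ≤ C R^{-β} for all y and R > 0 (where U_R = {|z| > R}), and ℒ^{n+1}(1_{U_R})(x) ≤ C R^{-β} ℒ^n 1(x) for all n. Then the measures ν_s = Σ_s^{-1} ∑_{n≥1} e^{-ns} (ℒ^n)^* δ_x (s > P, Σ_s = ∑ e^{-ns} ℒ^n 1(x)) satisfy ν_s(U_R) ≤ 2C e^{-P} R^{-β} for all s > P sufficiently close to P. -/

import Mathlib

/-- Uniform tail estimate ν_s(U_R) ≤ 2C e^{-P} R^{-β} for the approximating measures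
ν_s = Σ_s^{-1} ∑_{n≥1} e^{-ns} (ℒ^n)^* δ_x, evaluated on U_R = {|z| > R}. -/
theorem conformal_measure_tail_bound
    (ℒ : (ℂ → ℝ) → (ℂ → ℝ)) (x : ℂ) (C β P : ℝ) (hC : 0 < C) (hβ : 0 < β)
    (hpos : ∀ g : ℂ → ℝ, (∀ w, 0 ≤ g w) → ∀ w, 0 ≤ ℒ g w)
    (one : ℂ → ℝ) (hone : one = fun _ => 1)
    (ind : ℝ → ℂ → ℝ)
    (hind : ∀ R, ind R = Set.indicator {z : ℂ | R < ‖z‖} (fun _ => 1))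
    (h1 : ∀ R > (0 : ℝ), ∀ y : ℂ, ℒ (ind R) y ≤ C * R ^ (-β))
    (h2 : ∀ R > (0 : ℝ), ∀ n : ℕ, (ℒ^[n + 1]) (ind R) x ≤ C * R ^ (-β) * (ℒ^[n]) one x)
    (Sig : ℝ → ℝ)
    (hSig : ∀ s, Sig s = ∑' n : ℕ, Real.exp (-((n : ℝ) + 1) * s) * (ℒ^[n + 1]) one x)
    (hsum : ∀ s > P, Summable fun n : ℕ =>
      Real.exp (-((n : ℝ) + 1) * s) * (ℒ^[n + 1]) one x)
    (hsum' : ∀ s > P, ∀ R > (0 : ℝ), Summable fun n : ℕ =>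
      Real.exp (-((n : ℝ) + 1) * s) * (ℒ^[n + 1]) (ind R) x)
    (hdiv : Filter.Tendsto Sig (nhdsWithin P (Set.Ioi P)) Filter.atTop) :
    ∃ s₀ > P, ∀ s, P < s → s < s₀ → ∀ R > (0 : ℝ),
      (Sig s)⁻¹ * ∑' n : ℕ, Real.exp (-((n : ℝ) + 1) * s) * (ℒ^[n + 1]) (ind R) x
        ≤ 2 * C * Real.exp (-P) * R ^ (-β) := by
  have hmono := hdiv.eventually (Filter.eventually_ge_atTop 1)
  rw [(nhdsGT_basis P).eventually_iff] at hmono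
  obtain ⟨s₀, hs₀, hball⟩ := hmono
  refine ⟨s₀, hs₀, fun s hs hs' R hR => ?_⟩
  have hS1 : 1 ≤ Sig s := hball ⟨hs, hs'⟩
  have hSpos : 0 < Sig s := by linarith
  -- positivity of iterates
  have hit : ∀ (g : ℂ → ℝ), (∀ w, 0 ≤ g w) → ∀ n w, 0 ≤ (ℒ^[n]) g w := by
    intro g hg n
    induction n with
    | zero => exact hg
    | succ n ih =>
      intro w
      rw [Function.iterate_succ_apply']
      exact hpos _ ih w
  have hone_nonneg : ∀ w, 0 ≤ one w := by intro w; rw [hone]; norm_num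
  set a : ℕ → ℝ := fun n => Real.exp (-((n : ℝ) + 1) * s) * (ℒ^[n]) one x with ha
  have hshift : ∀ n : ℕ, a (n + 1)
      = Real.exp (-s) * (Real.exp (-((n : ℝ) + 1) * s) * (ℒ^[n + 1]) one x) := by
    intro n
    simp only [ha]
    rw [← mul_assoc, ← Real.exp_add]
    congr 2
    push_cast
    ring
  have hsa' : Summable (fun n => a (n + 1)) := by
    refine (((hsum s hs).mul_left (Real.exp (-s))).congr fun n => ?_)
    rw [hshift]
  have hsa : Summable a := (summable_nat_add_iff 1).mp hsa'
  have hRβ : 0 < R ^ (-β) := Real.rpow_pos_of_pos hR _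
  -- termwise bound
  have hterm : ∀ n : ℕ, Real.exp (-((n : ℝ) + 1) * s) * (ℒ^[n + 1]) (ind R) x
      ≤ C * R ^ (-β) * a n := by
    intro n
    have := mul_le_mul_of_nonneg_left (h2 R hR n) (Real.exp_nonneg (-((n : ℝ) + 1) * s))
    calc Real.exp (-((n : ℝ) + 1) * s) * (ℒ^[n + 1]) (ind R) x
        ≤ Real.exp (-((n : ℝ) + 1) * s) * (C * R ^ (-β) * (ℒ^[n]) one x) := this
      _ = C * R ^ (-β) * a n := by simp only [ha]; ring
  have hsumT : ∑' n : ℕ, Real.exp (-((n : ℝ) + 1) * s) * (ℒ^[n + 1]) (ind R) x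
      ≤ C * R ^ (-β) * ∑' n, a n := by
    rw [← tsum_mul_left]
    exact Summable.tsum_le_tsum hterm (hsum' s hs R hR) (hsa.mul_left _)
  have htsa : ∑' n, a n = Real.exp (-s) + Real.exp (-s) * Sig s := by
    rw [Summable.tsum_eq_zero_add hsa]
    congr 1
    · simp only [ha, hone]
      norm_num
    · rw [hSig s, ← tsum_mul_left]
      exact tsum_congr hshift
  have hT := hsumT
  rw [htsa] at hT
  -- final arithmetic
  have hinv_le : (Sig s)⁻¹ ≤ 1 := by
    rw [inv_le_one_iff₀]; right; exact hS1
  have hinv_nonneg : (0:ℝ) ≤ (Sig s)⁻¹ := inv_nonneg.mpr hSpos.le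
  have hEs : Real.exp (-s) ≤ Real.exp (-P) := Real.exp_le_exp.mpr (by linarith)
  have hEpos : 0 < Real.exp (-s) := Real.exp_pos _
  calc (Sig s)⁻¹ * ∑' n : ℕ, Real.exp (-((n : ℝ) + 1) * s) * (ℒ^[n + 1]) (ind R) x
      ≤ (Sig s)⁻¹ * (C * R ^ (-β) * (Real.exp (-s) + Real.exp (-s) * Sig s)) :=
        mul_le_mul_of_nonneg_left hT hinv_nonneg
    _ = C * R ^ (-β) * Real.exp (-s) * ((Sig s)⁻¹ + 1) := by
        field_simp
    _ ≤ C * R ^ (-β) * Real.exp (-s) * 2 := by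
        apply mul_le_mul_of_nonneg_left (by linarith)
        positivity
    _ ≤ 2 * C * Real.exp (-P) * R ^ (-β) := by nlinarith [mul_nonneg (mul_nonneg hC.le hRβ.le) (sub_nonneg.mpr hEs)]
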